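/- Let T be an n×n substochastic matrix (entrywise nonnegative with each row sum at most 1) whose spectral radius is strictly less than 1. Then trace((I−T)^{−1}) ≥ Σ_{k=1}^n 1/(1−t_{kk}). -/

import Mathlib

open Finset Matrix

private theorem substoch_pow_entry_nonneg (n : ℕ) (T : Matrix (Fin n) (Fin n) ℝ)
    (hnn : ∀ i j, 0 ≤ T i j) : ∀ m i j, 0 ≤ (T ^ m) i j := by
  intro m
  induction m with
  | zero => intro i j; by_cases h : i = j <;> simp [Matrix.one_apply, h]
  | succ m ih =>
    intro i j
    rw [pow_succ, Matrix.mul_apply]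
    exact Finset.sum_nonneg fun k _ => mul_nonneg (ih i k) (hnn k j)

private theorem substoch_pow_row_sum_le (n : ℕ) (T : Matrix (Fin n) (Fin n) ℝ)
    (hnn : ∀ i j, 0 ≤ T i j) (hrow : ∀ i, ∑ j, T i j ≤ 1) :
    ∀ m i, ∑ j, (T ^ m) i j ≤ 1 := by
  intro m
  induction m with
  | zero => intro i; simp [Matrix.one_apply]
  | succ m ih =>
    intro i
    have : ∑ j, (T ^ (m+1)) i j = ∑ k, (T ^ m) i k * (∑ j, T k j) := by
      simp_rw [pow_succ, Matrix.mul_apply, Finset.mul_sum]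
      rw [Finset.sum_comm]
    rw [this]
    calc ∑ k, (T ^ m) i k * (∑ j, T k j) ≤ ∑ k, (T ^ m) i k * 1 := by
          apply Finset.sum_le_sum
          intro k _
          exact mul_le_mul_of_nonneg_left (hrow k) (substoch_pow_entry_nonneg n T hnn m i k)
      _ = ∑ k, (T ^ m) i k := by simp
      _ ≤ 1 := ih i

private theorem substoch_pow_entry_le_one (n : ℕ) (T : Matrix (Fin n) (Fin n) ℝ)
    (hnn : ∀ i j, 0 ≤ T i j) (hrow : ∀ i, ∑ j, T i j ≤ 1) :
    ∀ m i j, (T ^ m) i j ≤ 1 := by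
  intro m i j
  calc (T ^ m) i j ≤ ∑ j', (T ^ m) i j' :=
        Finset.single_le_sum (fun j' _ => substoch_pow_entry_nonneg n T hnn m i j')
          (Finset.mem_univ j)
    _ ≤ 1 := substoch_pow_row_sum_le n T hnn hrow m i

private theorem substoch_det_one_sub_isUnit (n : ℕ) (T : Matrix (Fin n) (Fin n) ℝ)
    (hspec : ∀ z ∈ (Matrix.charpoly (T.map (Complex.ofReal))).roots, ‖z‖ < 1) :
    IsUnit (1 - T).det := by
  rw [isUnit_iff_ne_zero]
  intro h0
  set M : Matrix (Fin n) (Fin n) ℂ := T.map Complex.ofReal with hM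
  have hdetC : (1 - M).det = 0 := by
    have hmap : ((1 : Matrix (Fin n) (Fin n) ℝ) - T).map (algebraMap ℝ ℂ) = 1 - M := by
      ext i j
      by_cases h : i = j <;> simp [Matrix.map_apply, Matrix.one_apply, Matrix.sub_apply, h, hM]
    have h2 := (algebraMap ℝ ℂ).map_det (1 - T)
    rw [h0, map_zero] at h2
    rw [RingHom.mapMatrix_apply, hmap] at h2
    exact h2.symm
  have heval : (M.charpoly).eval 1 = (1 - M).det := by
    rw [Matrix.charpoly, ← Polynomial.coe_evalRingHom, RingHom.map_det]
    congr 1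
    ext i j
    by_cases h : i = j
    · subst h; simp [Matrix.charmatrix_apply_eq]
    · simp [Matrix.charmatrix_apply_ne _ _ _ h, Matrix.one_apply_ne h]
  have hroot : (1 : ℂ) ∈ M.charpoly.roots := by
    rw [Polynomial.mem_roots M.charpoly_monic.ne_zero]
    rw [Polynomial.IsRoot, heval, hdetC]
  have := hspec 1 hroot
  simp at this

private theorem substoch_inv_one_sub_nonneg (n : ℕ) (T : Matrix (Fin n) (Fin n) ℝ)
    (hnn : ∀ i j, 0 ≤ T i j)
    (hpow1 : ∀ m i j, (T ^ m) i j ≤ 1)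
    (hdet : IsUnit (1 - T).det) :
    ∀ i j, 0 ≤ (1 - T)⁻¹ i j := by
  set X := (1 - T)⁻¹ with hX
  have hXmul : X * (1 - T) = 1 := Matrix.nonsing_inv_mul _ hdet
  have key : ∀ N : ℕ, X = (∑ m ∈ Finset.range N, T ^ m) + X * T ^ N := by
    intro N
    have h1 : (1 - T) * (∑ m ∈ Finset.range N, T ^ m) = 1 - T ^ N := by
      have := mul_geom_sum T N
      rw [← neg_sub T 1, neg_mul, this, neg_sub]
    calc X = X * ((1 - T) * (∑ m ∈ Finset.range N, T ^ m)) + X * T ^ N := by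
            rw [h1]; noncomm_ring
      _ = (X * (1 - T)) * (∑ m ∈ Finset.range N, T ^ m) + X * T ^ N := by rw [mul_assoc]
      _ = (∑ m ∈ Finset.range N, T ^ m) + X * T ^ N := by rw [hXmul, one_mul]
  have hbound : ∀ i, ∀ N, ∀ j', -(∑ l, |X i l|) ≤ (X * T ^ N) i j' := by
    intro i N j'
    rw [Matrix.mul_apply]
    have h : ∀ k ∈ Finset.univ, -|X i k| ≤ X i k * (T ^ N) k j' := by
      intro k _
      have h2 : |X i k * (T ^ N) k j'| ≤ |X i k| := by
        rw [abs_mul]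
        calc |X i k| * |(T ^ N) k j'| ≤ |X i k| * 1 := by
              apply mul_le_mul_of_nonneg_left _ (abs_nonneg _)
              rw [abs_of_nonneg (substoch_pow_entry_nonneg n T hnn N k j')]
              exact hpow1 N k j'
          _ = |X i k| := mul_one _
      linarith [neg_abs_le (X i k * (T ^ N) k j')]
    calc -(∑ l, |X i l|) = ∑ k, -|X i k| := by rw [← Finset.sum_neg_distrib]
      _ ≤ ∑ k, X i k * (T ^ N) k j' := Finset.sum_le_sum h
  have hentry : ∀ N i j, ∑ m ∈ Finset.range N, (T ^ m) i j = X i j - (X * T ^ N) i j := by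
    intro N i j
    have h := congrArg (fun M => M i j) (key N)
    simp only [Matrix.add_apply] at h
    have h2 : (∑ m ∈ Finset.range N, T ^ m) i j = ∑ m ∈ Finset.range N, (T ^ m) i j := by
      rw [Matrix.sum_apply]
    linarith [h, h2.symm ▸ h]
  have htend0 : ∀ i j, Filter.Tendsto (fun m => (T ^ m) i j) Filter.atTop (nhds 0) := by
    intro i j
    apply Summable.tendsto_atTop_zero
    apply summable_of_sum_range_le (c := X i j + ∑ l, |X i l|)
      (fun m => substoch_pow_entry_nonneg n T hnn m i j)
    intro N
    rw [hentry N i j]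
    linarith [hbound i N j]
  have htendX : ∀ i j, Filter.Tendsto (fun m => (X * T ^ m) i j) Filter.atTop (nhds 0) := by
    intro i j
    have : ∀ m, (X * T ^ m) i j = ∑ k, X i k * (T ^ m) k j := fun m => Matrix.mul_apply
    simp_rw [this]
    have h0 : (0 : ℝ) = ∑ k : Fin n, (0 : ℝ) := by simp
    rw [h0]
    apply tendsto_finset_sum
    intro k _
    simpa using (htend0 k j).const_mul (X i k)
  intro i j
  have hpos : ∀ m, 0 ≤ ∑ l ∈ Finset.range m, (T ^ l) i j :=
    fun m => Finset.sum_nonneg fun l _ => substoch_pow_entry_nonneg n T hnn l i j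
  have hlim : Filter.Tendsto (fun m => ∑ l ∈ Finset.range m, (T ^ l) i j)
      Filter.atTop (nhds (X i j)) := by
    simp_rw [hentry]
    have := (htendX i j).const_sub (X i j)
    simpa using this
  exact ge_of_tendsto' hlim hpos

theorem substochastic_trace_inv_ge
    (n : ℕ) (T : Matrix (Fin n) (Fin n) ℝ)
    (hnn : ∀ i j, 0 ≤ T i j)
    (hrow : ∀ i, ∑ j, T i j ≤ 1)
    (hspec : ∀ z ∈ (Matrix.charpoly (T.map (Complex.ofReal))).roots, ‖z‖ < 1) :
    ∑ k, (1 - T k k)⁻¹ ≤ Matrix.trace (1 - T)⁻¹ := by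
  have hdet : IsUnit (1 - T).det := substoch_det_one_sub_isUnit n T hspec
  set X := (1 - T)⁻¹ with hX
  have hXnn : ∀ i j, 0 ≤ X i j :=
    substoch_inv_one_sub_nonneg n T hnn (substoch_pow_entry_le_one n T hnn hrow) hdet
  have hXmul : X * (1 - T) = 1 := Matrix.nonsing_inv_mul _ hdet
  -- entry (k,k) identity
  have hkey : ∀ k, X k k * (1 - T k k) = 1 + ∑ j ∈ Finset.univ.erase k, X k j * T j k := by
    intro k
    have h := congrArg (fun M => M k k) hXmul
    simp only [Matrix.mul_apply, Matrix.sub_apply, Matrix.one_apply] at h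
    -- h : ∑ j, X k j * ((if j = k then 1 else 0) - T j k) = 1
    have hsplit : ∑ j, X k j * ((if j = k then (1:ℝ) else 0) - T j k)
        = X k k * (1 - T k k) - ∑ j ∈ Finset.univ.erase k, X k j * T j k := by
      rw [← Finset.add_sum_erase _ (fun j => X k j * ((if j = k then (1:ℝ) else 0) - T j k))
        (Finset.mem_univ k)]
      simp only [if_pos rfl]
      have hc : ∀ j ∈ Finset.univ.erase k,
          X k j * ((if j = k then (1:ℝ) else 0) - T j k) = -(X k j * T j k) := by
        intro j hj
        rw [if_neg (Finset.ne_of_mem_erase hj)]; ring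
      rw [Finset.sum_congr rfl hc, Finset.sum_neg_distrib]
      simp only [if_true]
      ring
    rw [hsplit, if_pos trivial] at h
    linarith [h]
  have hterm : ∀ k, (1 - T k k)⁻¹ ≤ X k k := by
    intro k
    have hsum_nn : 0 ≤ ∑ j ∈ Finset.univ.erase k, X k j * T j k :=
      Finset.sum_nonneg fun j _ => mul_nonneg (hXnn k j) (hnn j k)
    have h1 : 1 ≤ X k k * (1 - T k k) := by rw [hkey k]; linarith
    have hpos : 0 < 1 - T k k := by
      by_contra h
      push_neg at h
      have : X k k * (1 - T k k) ≤ 0 := mul_nonpos_of_nonneg_of_nonpos (hXnn k k) h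
      linarith
    rw [inv_eq_one_div, div_le_iff₀ hpos]
    linarith [h1]
  have htr : Matrix.trace X = ∑ k, X k k := by simp [Matrix.trace, Matrix.diag]
  rw [htr]
  exact Finset.sum_le_sum fun k _ => hterm k
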